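/- Let X be a random variable taking four values indexed by bits (r,y) ∈ {0,1}², encoded into the four qutrit pure states ±a|0⟩ ± b|1⟩ + c|2⟩ (signs: (+,+) for (0,0), (+,−) for (0,1), (−,−) for (1,0), (−,+) for (1,1)) with a,b,c real and a²+b²+c²=1. Then the Holevo quantity of this ensemble with uniform prior, χ = S(ρ̄) − (1/4)Σ S(ρ_j) where ρ̄ = a²|0⟩⟨0| + b²|1⟩⟨1| + c²|2⟩⟨2|, satisfies χ = −a²log₂a² − b²log₂b² − c²log₂c² ≤ log₂3, and the accessible information obtainable by any POVM measurement on the qutrit is at most 1 bit. -/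

import Mathlib

open Matrix
open scoped ComplexOrder

/-- The four qutrit signal states `±a|0⟩ ± b|1⟩ + c|2⟩` indexed by `(r,y)`:
signs of the `|0⟩`-coefficient: `(-1)^r`; of the `|1⟩`-coefficient: `(-1)^(r+y)`. -/
noncomputable def sigVec (a b c : ℝ) (j : Fin 2 × Fin 2) : Fin 3 → ℂ :=
  ![(-1 : ℂ) ^ (j.1 : ℕ) * a, (-1 : ℂ) ^ ((j.1 : ℕ) + (j.2 : ℕ)) * b, (c : ℂ)]

/-- The corresponding density matrices `|ψ_j⟩⟨ψ_j|`. -/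
noncomputable def sigDM (a b c : ℝ) (j : Fin 2 × Fin 2) :
    Matrix (Fin 3) (Fin 3) ℂ :=
  Matrix.of fun i k => sigVec a b c j i * star (sigVec a b c j k)

/-- Shannon entropy (base 2) of a finitely supported nonnegative weight
function, with the convention `0·log₂0 = 0` (built into `Real.logb`). -/
noncomputable def shannonH {ι : Type*} [Fintype ι] (p : ι → ℝ) : ℝ :=
  -∑ i, p i * Real.logb 2 (p i)

/-! ### Auxiliary analytic lemmas -/

section Aux

open Real

private noncomputable def dc : ℝ := Real.sqrt (1/4 - 1/(8 * Real.log 2))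
private noncomputable def pA : ℝ := 1/2 - dc
private noncomputable def chif (p : ℝ) : ℝ := Real.binEntropy p - 4 * Real.log 2 * (p * (1 - p))
private noncomputable def chifD (p : ℝ) : ℝ :=
  Real.log (1-p) - Real.log p - 4 * Real.log 2 * (1 - 2*p)
private noncomputable def chifDD (p : ℝ) : ℝ := 8 * Real.log 2 - 1/p - 1/(1-p)

private lemma hL : (0.6931471803 : ℝ) < Real.log 2 := Real.log_two_gt_d9

private lemma kap_lt : 1/(8 * Real.log 2) < 1/4 := by
  rw [div_lt_div_iff₀ (by positivity) (by norm_num)]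
  nlinarith [hL]

private lemma kap_pos : 0 < 1/(8 * Real.log 2) := by positivity

private lemma dc2 : dc ^ 2 = 1/4 - 1/(8 * Real.log 2) := Real.sq_sqrt (by linarith [kap_lt, kap_pos])

private lemma dc_pos : 0 < dc := Real.sqrt_pos.mpr (by linarith [kap_lt, kap_pos])

private lemma dc_lt : dc < 1/2 := by nlinarith [dc2, dc_pos, kap_pos]

private lemma pA_pos : 0 < pA := by unfold pA; linarith [dc_lt]
private lemma pA_lt : pA < 1/2 := by unfold pA; linarith [dc_pos]

private lemma hder1 (p : ℝ) (hp0 : 0 < p) (hp1 : p < 1) : HasDerivAt chif (chifD p) p := by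
  have h1 : HasDerivAt Real.binEntropy (Real.log (1 - p) - Real.log p) p :=
    Real.hasDerivAt_binEntropy (ne_of_gt hp0) (ne_of_lt hp1)
  have h2 : HasDerivAt (fun p : ℝ => p * (1 - p)) (1 * (1 - p) + p * (0 - 1)) p :=
    (hasDerivAt_id p).mul ((hasDerivAt_const p 1).sub (hasDerivAt_id p))
  have h4 := h1.sub (h2.const_mul (4 * Real.log 2))
  have : chif = fun p => Real.binEntropy p - 4 * Real.log 2 * (p * (1 - p)) := rfl
  rw [this]
  refine h4.congr_deriv ?_
  unfold chifD; ring

private lemma hder2 (p : ℝ) (hp0 : 0 < p) (hp1 : p < 1) : HasDerivAt chifD (chifDD p) p := by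
  have h1 : HasDerivAt (fun p : ℝ => Real.log (1 - p)) ((0 - 1) / (1 - p)) p := by
    apply HasDerivAt.log ((hasDerivAt_const p 1).sub (hasDerivAt_id p))
    intro h; simp only [Pi.sub_apply, id_eq] at h; nlinarith
  have h2 : HasDerivAt (fun p : ℝ => Real.log p) (1 / p) p := by
    have := Real.hasDerivAt_log (ne_of_gt hp0)
    simpa [one_div] using this
  have h3 : HasDerivAt (fun p : ℝ => 4 * Real.log 2 * (1 - 2 * p)) (4 * Real.log 2 * (0 - 2 * 1)) p :=
    (((hasDerivAt_const p 1).sub ((hasDerivAt_id p).const_mul 2)).const_mul (4 * Real.log 2))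
  have h4 := (h1.sub h2).sub h3
  have : chifD = fun p => Real.log (1-p) - Real.log p - 4 * Real.log 2 * (1 - 2*p) := rfl
  rw [this]
  refine h4.congr_deriv ?_
  unfold chifDD
  field_simp
  ring

private lemma hmono : MonotoneOn chifD (Set.Icc pA (1/2)) := by
  apply monotoneOn_of_hasDerivWithinAt_nonneg (convex_Icc _ _) (f' := chifDD)
  · have hcont : ∀ x ∈ Set.Icc pA (1/2 : ℝ), 0 < x ∧ x < 1 := by
      intro x hx; exact ⟨lt_of_lt_of_le pA_pos hx.1, by linarith [hx.2]⟩
    apply ContinuousOn.sub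
    apply ContinuousOn.sub
    · apply ContinuousOn.log
      · fun_prop
      · intro x hx; have := hcont x hx; intro h; nlinarith [this.1, this.2]
    · apply ContinuousOn.log
      · fun_prop
      · intro x hx; exact ne_of_gt (hcont x hx).1
    · fun_prop
  · intro x hx
    rw [interior_Icc] at hx
    exact (hder2 x (lt_trans pA_pos hx.1) (by linarith [hx.2])).hasDerivWithinAt
  · intro x hx
    rw [interior_Icc] at hx
    obtain ⟨hx1, hx2⟩ := hx
    have hx0 : 0 < x := lt_trans pA_pos hx1
    have hx1' : x < 1 := by linarith
    have hdx : 1/2 - x < dc := by have := hx1; unfold pA at this; linarith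
    have hdx0 : 0 ≤ 1/2 - x := by linarith
    have hsq : (1/2 - x)^2 ≤ dc^2 := by nlinarith [dc_pos]
    have hxk : 1/(8 * Real.log 2) ≤ x * (1 - x) := by nlinarith [dc2]
    have h5 : 1/x + 1/(1-x) ≤ 8 * Real.log 2 := by
      rw [div_add_div _ _ (ne_of_gt hx0) (by linarith : (1:ℝ) - x ≠ 0)]
      have h6 : (8 * Real.log 2) = 1 / (1/(8 * Real.log 2)) := by
        rw [one_div_one_div]
      rw [h6, div_le_div_iff₀ (by nlinarith) kap_pos]
      nlinarith [kap_pos]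
    unfold chifDD; linarith

private lemma chifD_half : chifD (1/2) = 0 := by unfold chifD; norm_num

private lemma chifD_nonpos : ∀ x ∈ Set.Icc pA (1/2 : ℝ), chifD x ≤ 0 := by
  intro x hx
  have h12 : (1/2 : ℝ) ∈ Set.Icc pA (1/2 : ℝ) := ⟨le_of_lt pA_lt, le_refl _⟩
  have := hmono hx h12 hx.2
  rw [chifD_half] at this
  exact this

private lemma hanti : AntitoneOn chif (Set.Icc pA (1/2)) := by
  apply antitoneOn_of_hasDerivWithinAt_nonpos (convex_Icc _ _) (f' := chifD)
  · apply ContinuousOn.sub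
    · exact Real.binEntropy_continuous.continuousOn
    · fun_prop
  · intro x hx
    rw [interior_Icc] at hx
    exact (hder1 x (lt_trans pA_pos hx.1) (by linarith [hx.2])).hasDerivWithinAt
  · intro x hx
    rw [interior_Icc] at hx
    exact chifD_nonpos x ⟨le_of_lt hx.1, le_of_lt hx.2⟩

private lemma chif_half : chif (1/2) = 0 := by
  unfold chif
  rw [show (1/2 : ℝ) = 2⁻¹ by norm_num, Real.binEntropy_two_inv]
  ring

private lemma reg2 : ∀ x ∈ Set.Icc pA (1/2 : ℝ), 0 ≤ chif x := by
  intro x hx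
  have h12 : (1/2 : ℝ) ∈ Set.Icc pA (1/2 : ℝ) := ⟨le_of_lt pA_lt, le_refl _⟩
  have := hanti hx h12 hx.2
  rw [chif_half] at this
  exact this

private lemma hconc : ConcaveOn ℝ (Set.Icc 0 pA) chif := by
  apply concaveOn_of_hasDerivWithinAt2_nonpos (convex_Icc _ _) (f' := chifD) (f'' := chifDD)
  · apply ContinuousOn.sub
    · exact Real.binEntropy_continuous.continuousOn
    · fun_prop
  · intro x hx
    rw [interior_Icc] at hx
    exact (hder1 x hx.1 (by linarith [hx.2, pA_lt])).hasDerivWithinAt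
  · intro x hx
    rw [interior_Icc] at hx
    exact (hder2 x hx.1 (by linarith [hx.2, pA_lt])).hasDerivWithinAt
  · intro x hx
    rw [interior_Icc] at hx
    obtain ⟨hx1, hx2⟩ := hx
    have hx1' : x < 1 := by linarith [pA_lt]
    have hdx : dc < 1/2 - x := by have := hx2; unfold pA at this; linarith
    have hsq : dc^2 ≤ (1/2 - x)^2 := by nlinarith [dc_pos]
    have hxk : x * (1 - x) ≤ 1/(8 * Real.log 2) := by nlinarith [dc2]
    have hxk0 : 0 < x * (1 - x) := by nlinarith
    have h5 : 8 * Real.log 2 ≤ 1/x + 1/(1-x) := by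
      rw [div_add_div _ _ (ne_of_gt hx1) (by linarith : (1:ℝ) - x ≠ 0)]
      have h6 : (8 * Real.log 2) = 1 / (1/(8 * Real.log 2)) := by rw [one_div_one_div]
      rw [h6, div_le_div_iff₀ kap_pos (by nlinarith)]
      nlinarith [kap_pos]
    unfold chifDD; linarith

private lemma reg1 : ∀ x ∈ Set.Icc (0:ℝ) pA, 0 ≤ chif x := by
  intro x hx
  obtain ⟨hx0, hx1⟩ := hx
  have hb0 : 0 ≤ x / pA := div_nonneg hx0 (le_of_lt pA_pos)
  have hb1 : x / pA ≤ 1 := by rw [div_le_one pA_pos]; exact hx1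
  have hmem0 : (0:ℝ) ∈ Set.Icc (0:ℝ) pA := ⟨le_refl _, le_of_lt pA_pos⟩
  have hmem1 : pA ∈ Set.Icc (0:ℝ) pA := ⟨le_of_lt pA_pos, le_refl _⟩
  have hcomb := hconc.2 hmem0 hmem1 (by linarith : (0:ℝ) ≤ 1 - x / pA) hb0 (by ring)
  have harg : (1 - x / pA) • (0:ℝ) + (x / pA) • pA = x := by
    simp only [smul_eq_mul, mul_zero, zero_add]
    rw [div_mul_eq_mul_div, mul_div_assoc, div_self (ne_of_gt pA_pos), mul_one]
  rw [harg] at hcomb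
  have hchi0 : chif 0 = 0 := by unfold chif; simp
  have hchipA : 0 ≤ chif pA := reg2 pA ⟨le_refl _, le_of_lt pA_lt⟩
  rw [hchi0] at hcomb
  simp only [smul_eq_mul, mul_zero] at hcomb
  nlinarith

private lemma chi_nonneg : ∀ p : ℝ, 0 ≤ p → p ≤ 1 →
    4 * Real.log 2 * (p * (1 - p)) ≤ Real.binEntropy p := by
  have main : ∀ x : ℝ, 0 ≤ x → x ≤ 1/2 → 0 ≤ chif x := by
    intro x hx0 hx12
    rcases le_or_gt x pA with h | h
    · exact reg1 x ⟨hx0, h⟩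
    · exact reg2 x ⟨le_of_lt h, hx12⟩
  intro p hp0 hp1
  rcases le_or_gt p (1/2) with h | h
  · have := main p hp0 h
    unfold chif at this; linarith
  · have := main (1 - p) (by linarith) (by linarith)
    unfold chif at this
    rw [Real.binEntropy_one_sub] at this
    nlinarith

/-! ### the `B` function (unnormalized binary entropy of a pair) -/

private noncomputable def Bfun (x y : ℝ) : ℝ :=
  Real.negMulLog x + Real.negMulLog y - Real.negMulLog (x + y)

private lemma Bfun_zero_left (y : ℝ) : Bfun 0 y = 0 := by simp [Bfun]
private lemma Bfun_zero_right (x : ℝ) : Bfun x 0 = 0 := by simp [Bfun]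

private lemma Bfun_eq (x y : ℝ) (hx : 0 < x) (hy : 0 < y) :
    Bfun x y = (x + y) * Real.binEntropy (x / (x + y)) := by
  have hs : 0 < x + y := by linarith
  rw [Real.binEntropy_eq_negMulLog_add_negMulLog_one_sub]
  have h1 : 1 - x / (x + y) = y / (x + y) := by field_simp; ring
  rw [h1]
  simp only [Bfun, Real.negMulLog]
  rw [Real.log_div (ne_of_gt hx) (ne_of_gt hs), Real.log_div (ne_of_gt hy) (ne_of_gt hs)]
  field_simp
  ring

private lemma Bfun_nonneg (x y : ℝ) (hx : 0 ≤ x) (hy : 0 ≤ y) : 0 ≤ Bfun x y := by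
  rcases eq_or_lt_of_le hx with h | hx'
  · rw [← h, Bfun_zero_left]
  rcases eq_or_lt_of_le hy with h | hy'
  · rw [← h, Bfun_zero_right]
  rw [Bfun_eq x y hx' hy']
  have hs : 0 < x + y := by linarith
  apply mul_nonneg (le_of_lt hs)
  exact Real.binEntropy_nonneg (by positivity) (by rw [div_le_one hs]; linarith)

private lemma bin_low (x y : ℝ) (hx : 0 ≤ x) (hy : 0 ≤ y) :
    4 * Real.log 2 * (x * y) ≤ (x + y) * Bfun x y := by
  rcases eq_or_lt_of_le hx with h | hx'
  · rw [← h]; simp [Bfun_zero_left]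
  rcases eq_or_lt_of_le hy with h | hy'
  · rw [← h]; simp [Bfun_zero_right]
  have hs : 0 < x + y := by linarith
  rw [Bfun_eq x y hx' hy']
  have hchi := chi_nonneg (x / (x + y)) (by positivity) (by rw [div_le_one hs]; linarith)
  have h1 : 1 - x / (x + y) = y / (x + y) := by field_simp; ring
  rw [h1] at hchi
  have h2 := mul_le_mul_of_nonneg_left hchi (le_of_lt (mul_pos hs hs))
  have h3 : (x + y) * (x + y) * (4 * Real.log 2 * (x / (x + y) * (y / (x + y)))) =
      4 * Real.log 2 * (x * y) := by field_simp; try ring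
  have h4 : (x + y) * (x + y) * Real.binEntropy (x / (x + y)) =
      (x + y) * ((x + y) * Real.binEntropy (x / (x + y))) := by ring
  rw [h3, h4] at h2
  exact h2

private lemma klein (a c : ℝ) (ha : 0 ≤ a) (hc : 0 < c) :
    a - c ≤ a * (Real.log a - Real.log c) := by
  rcases eq_or_lt_of_le ha with h | ha'
  · rw [← h]; simp; linarith
  have h1 := Real.log_le_sub_one_of_pos (show (0:ℝ) < c / a by positivity)
  rw [Real.log_div (ne_of_gt hc) (ne_of_gt ha')] at h1
  have h2 : a * (Real.log c - Real.log a) ≤ a * (c / a - 1) :=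
    mul_le_mul_of_nonneg_left h1 ha
  have h3 : a * (c / a - 1) = c - a := by field_simp
  nlinarith [h2, h3]

private lemma superadd2 (x₁ y₁ x₂ y₂ : ℝ) (hx₁ : 0 ≤ x₁) (hy₁ : 0 ≤ y₁)
    (hx₂ : 0 ≤ x₂) (hy₂ : 0 ≤ y₂) :
    Bfun x₁ y₁ + Bfun x₂ y₂ ≤ Bfun (x₁ + x₂) (y₁ + y₂) := by
  rcases eq_or_lt_of_le (show (0:ℝ) ≤ x₁ + y₁ by linarith) with hs₁ | hs₁
  · have hx : x₁ = 0 := by linarith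
    have hy : y₁ = 0 := by linarith
    rw [hx, hy]; simp [Bfun]
  rcases eq_or_lt_of_le (show (0:ℝ) ≤ x₂ + y₂ by linarith) with hs₂ | hs₂
  · have hx : x₂ = 0 := by linarith
    have hy : y₂ = 0 := by linarith
    rw [hx, hy]; simp [Bfun]
  rcases eq_or_lt_of_le (show (0:ℝ) ≤ x₁ + x₂ by linarith) with hX | hX
  · have hx1 : x₁ = 0 := by linarith
    have hx2 : x₂ = 0 := by linarith
    rw [hx1, hx2]; simp [Bfun]
  rcases eq_or_lt_of_le (show (0:ℝ) ≤ y₁ + y₂ by linarith) with hY | hY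
  · have hy1 : y₁ = 0 := by linarith
    have hy2 : y₂ = 0 := by linarith
    rw [hy1, hy2]; simp [Bfun]
  have hS : 0 < (x₁ + x₂) + (y₁ + y₂) := by linarith
  have hSne : ((x₁ + x₂) + (y₁ + y₂)) ≠ 0 := ne_of_gt hS
  have hXne : (x₁ + x₂) ≠ 0 := ne_of_gt hX
  have hYne : (y₁ + y₂) ≠ 0 := ne_of_gt hY
  have hs₁ne : (x₁ + y₁) ≠ 0 := ne_of_gt hs₁
  have hs₂ne : (x₂ + y₂) ≠ 0 := ne_of_gt hs₂
  have hc₁ : 0 < (x₁ + x₂) * (x₁ + y₁) / ((x₁ + x₂) + (y₁ + y₂)) := by positivity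
  have hc₂ : 0 < (x₁ + x₂) * (x₂ + y₂) / ((x₁ + x₂) + (y₁ + y₂)) := by positivity
  have hd₁ : 0 < (y₁ + y₂) * (x₁ + y₁) / ((x₁ + x₂) + (y₁ + y₂)) := by positivity
  have hd₂ : 0 < (y₁ + y₂) * (x₂ + y₂) / ((x₁ + x₂) + (y₁ + y₂)) := by positivity
  have k1 := klein x₁ _ hx₁ hc₁
  have k2 := klein x₂ _ hx₂ hc₂
  have k3 := klein y₁ _ hy₁ hd₁
  have k4 := klein y₂ _ hy₂ hd₂
  have hlog1 : Real.log ((x₁ + x₂) * (x₁ + y₁) / ((x₁ + x₂) + (y₁ + y₂))) =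
      Real.log (x₁ + x₂) + Real.log (x₁ + y₁) - Real.log ((x₁ + x₂) + (y₁ + y₂)) := by
    rw [Real.log_div (mul_ne_zero hXne hs₁ne) hSne, Real.log_mul hXne hs₁ne]
  have hlog2 : Real.log ((x₁ + x₂) * (x₂ + y₂) / ((x₁ + x₂) + (y₁ + y₂))) =
      Real.log (x₁ + x₂) + Real.log (x₂ + y₂) - Real.log ((x₁ + x₂) + (y₁ + y₂)) := by
    rw [Real.log_div (mul_ne_zero hXne hs₂ne) hSne, Real.log_mul hXne hs₂ne]
  have hlog3 : Real.log ((y₁ + y₂) * (x₁ + y₁) / ((x₁ + x₂) + (y₁ + y₂))) =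
      Real.log (y₁ + y₂) + Real.log (x₁ + y₁) - Real.log ((x₁ + x₂) + (y₁ + y₂)) := by
    rw [Real.log_div (mul_ne_zero hYne hs₁ne) hSne, Real.log_mul hYne hs₁ne]
  have hlog4 : Real.log ((y₁ + y₂) * (x₂ + y₂) / ((x₁ + x₂) + (y₁ + y₂))) =
      Real.log (y₁ + y₂) + Real.log (x₂ + y₂) - Real.log ((x₁ + x₂) + (y₁ + y₂)) := by
    rw [Real.log_div (mul_ne_zero hYne hs₂ne) hSne, Real.log_mul hYne hs₂ne]
  have key : Bfun (x₁ + x₂) (y₁ + y₂) - (Bfun x₁ y₁ + Bfun x₂ y₂) =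
      x₁ * (Real.log x₁ - Real.log ((x₁ + x₂) * (x₁ + y₁) / ((x₁ + x₂) + (y₁ + y₂)))) +
      x₂ * (Real.log x₂ - Real.log ((x₁ + x₂) * (x₂ + y₂) / ((x₁ + x₂) + (y₁ + y₂)))) +
      y₁ * (Real.log y₁ - Real.log ((y₁ + y₂) * (x₁ + y₁) / ((x₁ + x₂) + (y₁ + y₂)))) +
      y₂ * (Real.log y₂ - Real.log ((y₁ + y₂) * (x₂ + y₂) / ((x₁ + x₂) + (y₁ + y₂)))) := by
    simp only [Bfun, Real.negMulLog]
    rw [hlog1, hlog2, hlog3, hlog4]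
    ring
  have hzero : (x₁ - (x₁ + x₂) * (x₁ + y₁) / ((x₁ + x₂) + (y₁ + y₂))) +
      (x₂ - (x₁ + x₂) * (x₂ + y₂) / ((x₁ + x₂) + (y₁ + y₂))) +
      (y₁ - (y₁ + y₂) * (x₁ + y₁) / ((x₁ + x₂) + (y₁ + y₂))) +
      (y₂ - (y₁ + y₂) * (x₂ + y₂) / ((x₁ + x₂) + (y₁ + y₂))) = 0 := by
    field_simp
    ring
  linarith [k1, k2, k3, k4, key, hzero]

/-! ### the unnormalized conditional-entropy functional `Fq` -/

private noncomputable def Fq (q : Fin 2 × Fin 2 → ℝ) : ℝ :=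
  (∑ j, Real.negMulLog (q j)) - Real.negMulLog (∑ j, q j)

private lemma superadd4 (q q' : Fin 2 × Fin 2 → ℝ) (hq : ∀ j, 0 ≤ q j)
    (hq' : ∀ j, 0 ≤ q' j) : Fq q + Fq q' ≤ Fq (fun j => q j + q' j) := by
  have c1 := superadd2 (q (0,0)) (q' (0,0)) (q (0,1)) (q' (0,1))
    (hq _) (hq' _) (hq _) (hq' _)
  have c2 := superadd2 (q (1,0)) (q' (1,0)) (q (1,1)) (q' (1,1))
    (hq _) (hq' _) (hq _) (hq' _)
  have c3 := superadd2 (q (0,0) + q (0,1)) (q' (0,0) + q' (0,1))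
    (q (1,0) + q (1,1)) (q' (1,0) + q' (1,1))
    (by have := hq (0,0); have := hq (0,1); linarith)
    (by have := hq' (0,0); have := hq' (0,1); linarith)
    (by have := hq (1,0); have := hq (1,1); linarith)
    (by have := hq' (1,0); have := hq' (1,1); linarith)
  simp only [Fq, Fintype.sum_prod_type, Fin.sum_univ_two] at *
  simp only [Bfun] at c1 c2 c3
  ring_nf at c1 c2 c3 ⊢
  linarith [c1, c2, c3]

private lemma Fq_zero : Fq (fun _ => 0) = 0 := by
  simp [Fq]

private lemma F_superadd_sum {n : ℕ} (v : Fin n → (Fin 2 × Fin 2) → ℝ)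
    (hv : ∀ i j, 0 ≤ v i j) :
    ∑ i, Fq (v i) ≤ Fq (fun j => ∑ i, v i j) := by
  induction n with
  | zero => simp [Fq_zero]
  | succ n ih =>
    rw [Fin.sum_univ_succ]
    have h1 := ih (fun i => v i.succ) (fun i j => hv i.succ j)
    have h2 := superadd4 (v 0) (fun j => ∑ i : Fin n, v i.succ j)
      (fun j => hv 0 j)
      (fun j => Finset.sum_nonneg fun i _ => hv i.succ j)
    have h3 : (fun j => v 0 j + ∑ i : Fin n, v i.succ j) =
        (fun j => ∑ i : Fin (n+1), v i j) := by
      funext j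
      rw [Fin.sum_univ_succ]
    rw [h3] at h2
    calc Fq (v 0) + ∑ i : Fin n, Fq (v i.succ)
        ≤ Fq (v 0) + Fq (fun j => ∑ i : Fin n, v i.succ j) := by linarith
      _ ≤ Fq (fun j => ∑ i : Fin (n+1), v i j) := h2

set_option maxHeartbeats 2000000 in
private lemma lemA_abs (A1 A2 A3 A4 : ℝ) (h1 : 0 ≤ A1) (h2 : 0 ≤ A2) (h3 : 0 ≤ A3)
    (h4 : 0 ≤ A4)
    (hkey : (A1 + A2 + (A3 + A4))^2 * ((A1 + A2) * (A3 + A4)) ≤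
      4 * ((A1 + A2)^2 * (A3 + A4)^2 + A1 * A2 * (A1 + A2 + (A3 + A4)) * (A3 + A4)
        + A3 * A4 * (A1 + A2 + (A3 + A4)) * (A1 + A2)))
    (hdeg1 : A1 + A2 = 0 → A3 = A4) (hdeg2 : A3 + A4 = 0 → A1 = A2) :
    (A1 + A2 + (A3 + A4)) * Real.log 2 ≤
      (Real.negMulLog A1 + Real.negMulLog A2 + (Real.negMulLog A3 + Real.negMulLog A4))
        - Real.negMulLog (A1 + A2 + (A3 + A4)) := by
  have hLpos : 0 < Real.log 2 := Real.log_pos (by norm_num)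
  have hsplit : (Real.negMulLog A1 + Real.negMulLog A2 +
      (Real.negMulLog A3 + Real.negMulLog A4)) - Real.negMulLog (A1 + A2 + (A3 + A4)) =
      Bfun (A1 + A2) (A3 + A4) + Bfun A1 A2 + Bfun A3 A4 := by
    simp only [Bfun]; ring
  rw [hsplit]
  have b0 := bin_low (A1 + A2) (A3 + A4) (by linarith) (by linarith)
  have b1 := bin_low A1 A2 h1 h2
  have b2 := bin_low A3 A4 h3 h4
  have n0 := Bfun_nonneg (A1 + A2) (A3 + A4) (by linarith) (by linarith)
  have n1 := Bfun_nonneg A1 A2 h1 h2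
  have n2 := Bfun_nonneg A3 A4 h3 h4
  rcases eq_or_lt_of_le (show (0:ℝ) ≤ A1 + A2 + (A3 + A4) by linarith) with hQ | hQ
  · have e1 : A1 = 0 := by linarith
    have e2 : A2 = 0 := by linarith
    have e3 : A3 = 0 := by linarith
    have e4 : A4 = 0 := by linarith
    rw [e1, e2, e3, e4]
    simp [Bfun]
  rcases eq_or_lt_of_le (show (0:ℝ) ≤ A1 + A2 by linarith) with hRp | hRp
  · have e1 : A1 = 0 := by linarith
    have e2 : A2 = 0 := by linarith
    have e34 : A3 = A4 := hdeg1 hRp.symm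
    have hA3pos : 0 < A3 := by nlinarith
    have b2' := bin_low A3 A4 h3 h4
    rw [← e34] at b2' ⊢
    have hB2 : (A3 + A3) * Real.log 2 ≤ Bfun A3 A3 := by nlinarith
    rw [e1, e2]
    have hz : Bfun ((0:ℝ) + 0) (A3 + A3) = 0 := by norm_num [Bfun]
    have hz2 : Bfun (0:ℝ) 0 = 0 := by norm_num [Bfun]
    rw [hz, hz2]
    linarith
  rcases eq_or_lt_of_le (show (0:ℝ) ≤ A3 + A4 by linarith) with hRm | hRm
  · have e3 : A3 = 0 := by linarith
    have e4 : A4 = 0 := by linarith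
    have e12 : A1 = A2 := hdeg2 hRm.symm
    have hA1pos : 0 < A1 := by nlinarith
    have b1' := bin_low A1 A2 h1 h2
    rw [← e12] at b1' ⊢
    have hB1 : (A1 + A1) * Real.log 2 ≤ Bfun A1 A1 := by nlinarith
    rw [e3, e4]
    have hz : Bfun (A1 + A1) ((0:ℝ) + 0) = 0 := by norm_num [Bfun]
    have hz2 : Bfun (0:ℝ) 0 = 0 := by norm_num [Bfun]
    rw [hz, hz2]
    linarith
  · generalize hB0 : Bfun (A1 + A2) (A3 + A4) = B0 at b0 ⊢
    generalize hB1 : Bfun A1 A2 = B1 at b1 ⊢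
    generalize hB2 : Bfun A3 A4 = B2 at b2 ⊢
    have m0 : (A1 + A2) * (A3 + A4) * (4 * Real.log 2 * ((A1 + A2) * (A3 + A4))) ≤
        (A1 + A2) * (A3 + A4) * ((A1 + A2 + (A3 + A4)) * B0) :=
      mul_le_mul_of_nonneg_left b0 (by positivity)
    have m1 : (A1 + A2 + (A3 + A4)) * (A3 + A4) * (4 * Real.log 2 * (A1 * A2)) ≤
        (A1 + A2 + (A3 + A4)) * (A3 + A4) * ((A1 + A2) * B1) :=
      mul_le_mul_of_nonneg_left b1 (by positivity)
    have m2 : (A1 + A2 + (A3 + A4)) * (A1 + A2) * (4 * Real.log 2 * (A3 * A4)) ≤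
        (A1 + A2 + (A3 + A4)) * (A1 + A2) * ((A3 + A4) * B2) :=
      mul_le_mul_of_nonneg_left b2 (by positivity)
    have mk := mul_le_mul_of_nonneg_left hkey (le_of_lt hLpos)
    have hT : 0 < (A1 + A2 + (A3 + A4)) * ((A1 + A2) * (A3 + A4)) := by positivity
    have big : (A1 + A2 + (A3 + A4)) * Real.log 2 *
        ((A1 + A2 + (A3 + A4)) * ((A1 + A2) * (A3 + A4))) ≤
        (B0 + B1 + B2) *
        ((A1 + A2 + (A3 + A4)) * ((A1 + A2) * (A3 + A4))) := by
      ring_nf at m0 m1 m2 mk ⊢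
      linarith [m0, m1, m2, mk]
    exact le_of_mul_le_mul_right big hT

/-! ### the per-rank-one-component bound -/

private noncomputable def efun (α β γ : ℝ) (j : Fin 2 × Fin 2) : ℝ :=
  ((-1 : ℝ)^(j.1 : ℕ) * α + (-1 : ℝ)^((j.1 : ℕ) + (j.2 : ℕ)) * β + γ)^2

private lemma efun_nonneg (α β γ : ℝ) (j : Fin 2 × Fin 2) : 0 ≤ efun α β γ j := sq_nonneg _

private lemma lemA (α β γ : ℝ) :
    (∑ j, efun α β γ j) * Real.log 2 ≤ Fq (efun α β γ) := by
  have e00 : efun α β γ (0,0) = (α + β + γ)^2 := by simp [efun]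
  have e01 : efun α β γ (0,1) = (α - β + γ)^2 := by simp [efun]; try ring
  have e10 : efun α β γ (1,0) = (-α - β + γ)^2 := by simp [efun]; try ring
  have e11 : efun α β γ (1,1) = (-α + β + γ)^2 := by simp [efun]; try ring
  have hsum : ∑ j, efun α β γ j =
      (α + β + γ)^2 + (α - β + γ)^2 + ((-α - β + γ)^2 + (-α + β + γ)^2) := by
    rw [Fintype.sum_prod_type]
    simp only [Fin.sum_univ_two]
    rw [e00, e01, e10, e11]
  have hg : ∑ j, Real.negMulLog (efun α β γ j) =
      Real.negMulLog ((α + β + γ)^2) + Real.negMulLog ((α - β + γ)^2) +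
      (Real.negMulLog ((-α - β + γ)^2) + Real.negMulLog ((-α + β + γ)^2)) := by
    rw [Fintype.sum_prod_type]
    simp only [Fin.sum_univ_two]
    rw [e00, e01, e10, e11]
  have hFq : Fq (efun α β γ) =
      (Real.negMulLog ((α + β + γ)^2) + Real.negMulLog ((α - β + γ)^2) +
       (Real.negMulLog ((-α - β + γ)^2) + Real.negMulLog ((-α + β + γ)^2))) -
      Real.negMulLog ((α + β + γ)^2 + (α - β + γ)^2 +
        ((-α - β + γ)^2 + (-α + β + γ)^2)) := by
    unfold Fq
    rw [hg, hsum]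
  rw [hsum, hFq]
  refine lemA_abs _ _ _ _ (sq_nonneg _) (sq_nonneg _) (sq_nonneg _) (sq_nonneg _) ?_ ?_ ?_
  · have hid : 4 * (((α+β+γ)^2 + (α-β+γ)^2)^2 * ((-α-β+γ)^2 + (-α+β+γ)^2)^2
        + (α+β+γ)^2 * (α-β+γ)^2
          * ((α+β+γ)^2 + (α-β+γ)^2 + ((-α-β+γ)^2 + (-α+β+γ)^2))
          * ((-α-β+γ)^2 + (-α+β+γ)^2)
        + (-α-β+γ)^2 * (-α+β+γ)^2
          * ((α+β+γ)^2 + (α-β+γ)^2 + ((-α-β+γ)^2 + (-α+β+γ)^2))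
          * ((α+β+γ)^2 + (α-β+γ)^2))
        - ((α+β+γ)^2 + (α-β+γ)^2 + ((-α-β+γ)^2 + (-α+β+γ)^2))^2
          * (((α+β+γ)^2 + (α-β+γ)^2) * ((-α-β+γ)^2 + (-α+β+γ)^2))
        = 64 * (β^2 * β^2 - (α^2 - γ^2)^2)^2 := by ring
    linarith [sq_nonneg (β^2 * β^2 - (α^2 - γ^2)^2), hid]
  · intro h
    have hz1 : (α + β + γ)^2 = 0 := by nlinarith [sq_nonneg (α + β + γ), sq_nonneg (α - β + γ)]
    have hz2 : (α - β + γ)^2 = 0 := by nlinarith [sq_nonneg (α + β + γ), sq_nonneg (α - β + γ)]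
    have z1 : α + β + γ = 0 := (pow_eq_zero_iff (by norm_num : (2:ℕ) ≠ 0)).mp hz1
    have z2 : α - β + γ = 0 := (pow_eq_zero_iff (by norm_num : (2:ℕ) ≠ 0)).mp hz2
    linear_combination (2*(α - γ)) * z1 - (2*(α - γ)) * z2
  · intro h
    have hz1 : (-α - β + γ)^2 = 0 := by
      nlinarith [sq_nonneg (-α - β + γ), sq_nonneg (-α + β + γ)]
    have hz2 : (-α + β + γ)^2 = 0 := by
      nlinarith [sq_nonneg (-α - β + γ), sq_nonneg (-α + β + γ)]
    have z1 : -α - β + γ = 0 := (pow_eq_zero_iff (by norm_num : (2:ℕ) ≠ 0)).mp hz1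
    have z2 : -α + β + γ = 0 := (pow_eq_zero_iff (by norm_num : (2:ℕ) ≠ 0)).mp hz2
    linear_combination (-2*(α + γ)) * z1 + (2*(α + γ)) * z2

private lemma lemA2 (α β γ α' β' γ' : ℝ) :
    (∑ j, (efun α β γ j + efun α' β' γ' j)) * Real.log 2 ≤
      Fq (fun j => efun α β γ j + efun α' β' γ' j) := by
  have h := superadd4 (efun α β γ) (efun α' β' γ')
    (fun j => efun_nonneg _ _ _ j) (fun j => efun_nonneg _ _ _ j)
  have l1 := lemA α β γ
  have l2 := lemA α' β' γ'
  have hs : ∑ j, (efun α β γ j + efun α' β' γ' j) =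
      (∑ j, efun α β γ j) + (∑ j, efun α' β' γ' j) := Finset.sum_add_distrib
  rw [hs, add_mul]
  linarith

/-! ### matrix computations -/

private lemma trace_quad (B : Matrix (Fin 3) (Fin 3) ℂ) (ψ : Fin 3 → ℂ) :
    ((B.conjTranspose * B) * Matrix.of (fun i k => ψ i * star (ψ k))).trace
      = ∑ r : Fin 3, star (∑ l : Fin 3, B r l * ψ l) * (∑ l : Fin 3, B r l * ψ l) := by
  simp only [Matrix.trace, Matrix.diag, Matrix.mul_apply, Matrix.conjTranspose_apply,
    Matrix.of_apply, Fin.sum_univ_three, star_add, star_mul']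
  ring

private lemma rep_lemma (a b c : ℝ) (B : Matrix (Fin 3) (Fin 3) ℂ) (j : Fin 2 × Fin 2) :
    (1/4 : ℝ) * (((B.conjTranspose * B) * sigDM a b c j).trace).re
      = ∑ r : Fin 3,
        (efun (a * (B r 0).re / 2) (b * (B r 1).re / 2) (c * (B r 2).re / 2) j +
         efun (a * (B r 0).im / 2) (b * (B r 1).im / 2) (c * (B r 2).im / 2) j) := by
  have h := trace_quad B (sigVec a b c j)
  rw [show sigDM a b c j
      = Matrix.of (fun i k => sigVec a b c j i * star (sigVec a b c j k)) from rfl, h]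
  rw [Complex.re_sum]
  rw [Finset.mul_sum]
  apply Finset.sum_congr rfl
  intro r _
  have hsq : ∀ z : ℂ, (star z * z).re = z.re^2 + z.im^2 := by
    intro z; simp [Complex.star_def, Complex.mul_re]; ring
  rw [hsq]
  obtain ⟨j1, j2⟩ := j
  fin_cases j1 <;> fin_cases j2 <;>
    simp only [sigVec, efun, Fin.sum_univ_three, Matrix.cons_val_zero, Matrix.cons_val_one,
      Matrix.head_cons, Matrix.cons_val_two, Matrix.tail_cons, Complex.add_re, Complex.add_im,
      Complex.mul_re, Complex.mul_im, Complex.ofReal_re, Complex.ofReal_im, pow_zero, pow_one,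
      one_mul, neg_mul, Complex.neg_re, Complex.neg_im, Complex.one_re, Complex.one_im,
      Fin.isValue] <;>
    norm_num <;> ring

private lemma trace_dm (a b c : ℝ) (habc : a ^ 2 + b ^ 2 + c ^ 2 = 1) (j : Fin 2 × Fin 2) :
    (sigDM a b c j).trace = 1 := by
  obtain ⟨j1, j2⟩ := j
  have hc : ((a:ℂ)^2 + (b:ℂ)^2 + (c:ℂ)^2) = 1 := by
    exact_mod_cast congrArg (fun x : ℝ => (x:ℂ)) habc
  fin_cases j1 <;> fin_cases j2 <;>
    simp only [Matrix.trace, Matrix.diag, sigDM, sigVec, Matrix.of_apply, Fin.sum_univ_three,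
      Matrix.cons_val_zero, Matrix.cons_val_one, Matrix.head_cons, Matrix.cons_val_two,
      Matrix.tail_cons, star_mul', star_pow, star_neg, star_one, Complex.star_def,
      Complex.conj_ofReal, Fin.isValue] <;>
    norm_num <;> linear_combination hc

private lemma perk (a b c : ℝ) (M : Matrix (Fin 3) (Fin 3) ℂ) (hM : M.PosSemidef) :
    (∑ j, (1/4 : ℝ) * ((M * sigDM a b c j).trace).re) * Real.log 2
      ≤ Fq (fun j => (1/4 : ℝ) * ((M * sigDM a b c j).trace).re) := by
  obtain ⟨B, hB⟩ : ∃ B : Matrix (Fin 3) (Fin 3) ℂ, M = B.conjTranspose * B := by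
    open scoped MatrixOrder in
    have h0 : 0 ≤ M := Matrix.nonneg_iff_posSemidef.mpr hM
    open scoped MatrixOrder in
    exact ⟨CFC.sqrt M, by
      rw [← Matrix.star_eq_conjTranspose, (CFC.sqrt_nonneg M).isSelfAdjoint.star_eq,
        CFC.sqrt_mul_sqrt_self M h0]⟩
  subst hB
  set v : Fin 3 → (Fin 2 × Fin 2) → ℝ := fun r j =>
    efun (a * (B r 0).re / 2) (b * (B r 1).re / 2) (c * (B r 2).re / 2) j +
    efun (a * (B r 0).im / 2) (b * (B r 1).im / 2) (c * (B r 2).im / 2) j with hv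
  have hrep : ∀ j, (1/4 : ℝ) * (((B.conjTranspose * B) * sigDM a b c j).trace).re
      = ∑ r : Fin 3, v r j := fun j => rep_lemma a b c B j
  have hvnn : ∀ r j, 0 ≤ v r j := fun r j =>
    add_nonneg (efun_nonneg _ _ _ _) (efun_nonneg _ _ _ _)
  have h1 : ∑ r : Fin 3, Fq (v r) ≤ Fq (fun j => ∑ r : Fin 3, v r j) :=
    F_superadd_sum v hvnn
  have h2 : ∀ r : Fin 3, (∑ j, v r j) * Real.log 2 ≤ Fq (v r) := fun r => lemA2 _ _ _ _ _ _
  have hq : (fun j => (1/4 : ℝ) * (((B.conjTranspose * B) * sigDM a b c j).trace).re)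
      = fun j => ∑ r : Fin 3, v r j := funext hrep
  rw [hq, show (∑ j, ∑ r : Fin 3, v r j) = ∑ r : Fin 3, ∑ j, v r j from Finset.sum_comm,
    Finset.sum_mul]
  calc ∑ r : Fin 3, (∑ j, v r j) * Real.log 2 ≤ ∑ r : Fin 3, Fq (v r) :=
        Finset.sum_le_sum fun r _ => h2 r
    _ ≤ Fq (fun j => ∑ r : Fin 3, v r j) := h1

private lemma shannonH_mul_log {ι : Type*} [Fintype ι] (f : ι → ℝ) :
    (∑ i, Real.negMulLog (f i)) = shannonH f * Real.log 2 := by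
  unfold shannonH
  rw [neg_mul, Finset.sum_mul]
  rw [← Finset.sum_neg_distrib]
  apply Finset.sum_congr rfl
  intro i _
  unfold Real.negMulLog Real.logb
  have h2 : Real.log 2 ≠ 0 := ne_of_gt (Real.log_pos (by norm_num))
  field_simp

private lemma jensen3 (x y z : ℝ) (hx : 0 ≤ x) (hy : 0 ≤ y) (hz : 0 ≤ z)
    (h : x + y + z = 1) :
    Real.negMulLog x + Real.negMulLog y + Real.negMulLog z ≤ Real.log 3 := by
  have hc := Real.concaveOn_negMulLog
  have hm : ∀ w : ℝ, 0 ≤ w → w ∈ Set.Ici (0:ℝ) := fun w hw => hw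
  have h1 := hc.2 (hm x hx) (hm y hy) (by norm_num : (0:ℝ) ≤ 1/2)
    (by norm_num : (0:ℝ) ≤ 1/2) (by norm_num)
  have h2 := hc.2 (hm ((x+y)/2) (by positivity)) (hm z hz)
    (by norm_num : (0:ℝ) ≤ 2/3) (by norm_num : (0:ℝ) ≤ 1/3) (by norm_num)
  simp only [smul_eq_mul] at h1 h2
  have harg1 : (1/2 : ℝ) * x + (1/2 : ℝ) * y = (x + y)/2 := by ring
  rw [harg1] at h1
  have harg2 : (2/3 : ℝ) * ((x+y)/2) + (1/3 : ℝ) * z = 1/3 := by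
    field_simp; try linarith
  rw [harg2] at h2
  have h13 : Real.negMulLog (1/3 : ℝ) = Real.log 3 / 3 := by
    unfold Real.negMulLog
    rw [show (1/3 : ℝ) = 3⁻¹ by norm_num, Real.log_inv]
    ring
  rw [h13] at h2
  linarith

end Aux

theorem stmt_19 (a b c : ℝ) (habc : a ^ 2 + b ^ 2 + c ^ 2 = 1) :
    -- Holevo quantity of the ensemble (each signal state is pure, so
    -- χ = S(ρ̄) for the diagonal average state ρ̄ = diag(a²,b²,c²)):
    (-(a ^ 2 * Real.logb 2 (a ^ 2)) - b ^ 2 * Real.logb 2 (b ^ 2)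
        - c ^ 2 * Real.logb 2 (c ^ 2) ≤ Real.logb 2 3) ∧
    -- accessible information: for any POVM {M k}, the mutual information
    -- I = H(J) + H(K) - H(J,K) between the uniform input (r,y) and the
    -- measurement outcome, with p(j,k) = (1/4)·Re Tr(M_k ρ_j), is ≤ 1 bit.
    ∀ (ι : Type) [Fintype ι] (M : ι → Matrix (Fin 3) (Fin 3) ℂ),
      (∀ k, (M k).PosSemidef) → (∑ k, M k) = 1 →
      ∀ p : Fin 2 × Fin 2 → ι → ℝ,
        (∀ j k, p j k = (1 / 4 : ℝ) * ((M k * sigDM a b c j).trace).re) →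
        shannonH (fun j => ∑ k, p j k) + shannonH (fun k => ∑ j, p j k)
            - shannonH (fun jk : (Fin 2 × Fin 2) × ι => p jk.1 jk.2) ≤ 1 := by
  have hLpos : 0 < Real.log 2 := Real.log_pos (by norm_num)
  constructor
  · -- Part 1
    have h3 := jensen3 (a^2) (b^2) (c^2) (sq_nonneg _) (sq_nonneg _) (sq_nonneg _) habc
    have key : (-(a ^ 2 * Real.logb 2 (a ^ 2)) - b ^ 2 * Real.logb 2 (b ^ 2)
        - c ^ 2 * Real.logb 2 (c ^ 2)) * Real.log 2 =
        Real.negMulLog (a^2) + Real.negMulLog (b^2) + Real.negMulLog (c^2) := by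
      simp only [Real.logb]
      unfold Real.negMulLog
      field_simp
      ring
    have key2 : Real.logb 2 3 * Real.log 2 = Real.log 3 := by
      simp only [Real.logb]
      field_simp
    apply le_of_mul_le_mul_right _ hLpos
    rw [key, key2]
    exact h3
  · -- Part 2
    intro ι instFT M hPSD hsum1 p hp
    -- J-marginal is uniform 1/4
    have hmargJ : ∀ j, ∑ k, p j k = 1/4 := by
      intro j
      simp only [hp]
      rw [← Finset.mul_sum]
      have h1 : (∑ k, M k) * sigDM a b c j = ∑ k, (M k * sigDM a b c j) :=
        Finset.sum_mul _ _ _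
      have h2 : ∑ k, ((M k * sigDM a b c j).trace).re
          = (((∑ k, M k) * sigDM a b c j).trace).re := by
        rw [h1, Matrix.trace_sum, Complex.re_sum]
      rw [h2, hsum1, one_mul, trace_dm a b c habc j]
      norm_num
    -- H(J) = 2
    have hHJ : shannonH (fun j : Fin 2 × Fin 2 => ∑ k, p j k) = 2 := by
      have hfun : (fun j : Fin 2 × Fin 2 => ∑ k, p j k) = fun _ => (1/4 : ℝ) :=
        funext hmargJ
      rw [hfun]
      unfold shannonH
      have hlogb : Real.logb 2 (1/4 : ℝ) = -2 := by
        have h4 : Real.log (1/4 : ℝ) = -2 * Real.log 2 := by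
          rw [show (1/4:ℝ) = ((2:ℝ)^(2:ℕ))⁻¹ by norm_num, Real.log_inv, Real.log_pow]
          push_cast; ring
        have h2 : Real.log 2 ≠ 0 := ne_of_gt hLpos
        rw [Real.logb, h4]
        field_simp
      simp only [hlogb]
      rw [Finset.sum_const]
      norm_num
    -- the key entropy inequality
    have hkey : 1 * Real.log 2 ≤
        (shannonH (fun jk : (Fin 2 × Fin 2) × ι => p jk.1 jk.2)
          - shannonH (fun k => ∑ j, p j k)) * Real.log 2 := by
      rw [sub_mul, ← shannonH_mul_log, ← shannonH_mul_log]
      have hjoint : ∑ jk : (Fin 2 × Fin 2) × ι, Real.negMulLog (p jk.1 jk.2)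
          = ∑ k, ∑ j, Real.negMulLog (p j k) := by
        rw [Fintype.sum_prod_type]
        exact Finset.sum_comm
      rw [hjoint]
      have hFqk : ∀ k, (∑ j, p j k) * Real.log 2 ≤
          (∑ j, Real.negMulLog (p j k)) - Real.negMulLog (∑ j, p j k) := by
        intro k
        have hfun : (fun j => p j k)
            = fun j => (1/4 : ℝ) * ((M k * sigDM a b c j).trace).re := by
          funext j; exact hp j k
        have := perk a b c (M k) (hPSD k)
        rw [← hfun] at this
        exact this
      have hsum : ∑ k, (∑ j, p j k) * Real.log 2 ≤
          ∑ k, ((∑ j, Real.negMulLog (p j k)) - Real.negMulLog (∑ j, p j k)) :=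
        Finset.sum_le_sum fun k _ => hFqk k
      have hmass : ∑ k, (∑ j, p j k) = 1 := by
        rw [Finset.sum_comm]
        simp only [hmargJ]
        rw [Finset.sum_const]
        norm_num
      have hlhs : ∑ k, (∑ j, p j k) * Real.log 2 = 1 * Real.log 2 := by
        rw [← Finset.sum_mul, hmass]
      have hrhs : ∑ k, ((∑ j, Real.negMulLog (p j k)) - Real.negMulLog (∑ j, p j k))
          = (∑ k, ∑ j, Real.negMulLog (p j k)) - ∑ k, Real.negMulLog (∑ j, p j k) :=
        Finset.sum_sub_distrib _ _
      rw [hlhs, hrhs] at hsum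
      exact hsum
    have hge : 1 ≤ shannonH (fun jk : (Fin 2 × Fin 2) × ι => p jk.1 jk.2)
        - shannonH (fun k => ∑ j, p j k) :=
      le_of_mul_le_mul_right hkey hLpos
    rw [hHJ]
    linarith
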